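/- arXiv:2008.07576 — 3 statements merged into one kernel-verified Lean document; each statement's English description precedes it below -/
import Mathlib

section
/- Let ε > 0. Suppose K : ℝ³ × ℝ³ → ℂ is measurable and there is a constant C such that |K(x,y)| ≤ C / (⟨x⟩ ⟨y⟩ ⟨|x| − |y|⟩^{2+ε}) for all x, y ∈ ℝ³. Then the integral operator (Kf)(x) = ∫_{ℝ³} K(x,y) f(y) dy is bounded on L^p(ℝ³) for every 1 ≤ p ≤ ∞; that is, there is a constant C′ such that for every f ∈ L^p(ℝ³) the integral converges for almost every x and ‖Kf‖_{L^p} ≤ C′ ‖f‖_{L^p}. -/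
open MeasureTheory Real Set ENNReal

noncomputable section

abbrev E3 := EuclideanSpace ℝ (Fin 3)

/-- Japanese bracket on ℝ³. -/
def jap (x : E3) : ℝ := Real.sqrt (1 + ‖x‖ ^ 2)

/-- Japanese bracket on ℝ. -/
def japR (t : ℝ) : ℝ := Real.sqrt (1 + t ^ 2)

lemma one_le_jap (x : E3) : 1 ≤ jap x := by
  have h : Real.sqrt 1 ≤ Real.sqrt (1 + ‖x‖ ^ 2) :=
    Real.sqrt_le_sqrt (by nlinarith [sq_nonneg ‖x‖])
  rwa [Real.sqrt_one] at h

lemma one_le_japR (t : ℝ) : 1 ≤ japR t := by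
  have h : Real.sqrt 1 ≤ Real.sqrt (1 + t ^ 2) :=
    Real.sqrt_le_sqrt (by nlinarith [sq_nonneg t])
  rwa [Real.sqrt_one] at h

lemma jap_pos (x : E3) : 0 < jap x := lt_of_lt_of_le one_pos (one_le_jap x)
lemma japR_pos (t : ℝ) : 0 < japR t := lt_of_lt_of_le one_pos (one_le_japR t)

lemma jap_sq (x : E3) : jap x * jap x = 1 + ‖x‖ ^ 2 := by
  rw [jap]; exact Real.mul_self_sqrt (by positivity)

lemma jap_le (x y : E3) : jap y ≤ 2 * (jap x * japR (‖x‖ - ‖y‖)) := by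
  have h1 : jap y ≤ 1 + ‖y‖ := by
    rw [jap]; exact sqrt_one_add_norm_sq_le y
  have h2 : ‖y‖ ≤ ‖x‖ + |‖x‖ - ‖y‖| := by
    have := le_abs_self (‖y‖ - ‖x‖)
    rw [abs_sub_comm] at this
    linarith
  have h3 : ‖x‖ + |‖x‖ - ‖y‖| ≤ jap x * japR (‖x‖ - ‖y‖) := by
    rw [jap, japR, ← Real.sqrt_mul (by positivity)]
    have ha0 : (0:ℝ) ≤ ‖x‖ := norm_nonneg x
    have hs : (‖x‖ + |‖x‖ - ‖y‖|) ^ 2 ≤ (1 + ‖x‖ ^ 2) * (1 + (‖x‖ - ‖y‖) ^ 2) := by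
      nlinarith [sq_nonneg (‖x‖ * |‖x‖ - ‖y‖| - 1), sq_abs (‖x‖ - ‖y‖), abs_nonneg (‖x‖ - ‖y‖)]
    calc ‖x‖ + |‖x‖ - ‖y‖|
        = Real.sqrt ((‖x‖ + |‖x‖ - ‖y‖|) ^ 2) :=
          (Real.sqrt_sq (by positivity)).symm
      _ ≤ Real.sqrt ((1 + ‖x‖ ^ 2) * (1 + (‖x‖ - ‖y‖) ^ 2)) := Real.sqrt_le_sqrt hs
  nlinarith [one_le_jap x, one_le_japR (‖x‖ - ‖y‖)]

lemma japR_rpow (t s : ℝ) : japR t ^ s = (1 + t ^ 2) ^ (s / 2) := by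
  rw [japR, Real.sqrt_eq_rpow, ← Real.rpow_mul (by positivity)]
  ring_nf

lemma ker_ptwise (ε : ℝ) (C : ℝ) (hC : 0 ≤ C) (x y : E3) :
    C / (jap x * jap y * japR (‖x‖ - ‖y‖) ^ (2 + ε))
      ≤ 2 * C * ((1 + ‖y‖ ^ 2)⁻¹ * (1 + (‖x‖ - ‖y‖) ^ 2) ^ (-(1 + ε) / 2)) := by
  set t := ‖x‖ - ‖y‖ with ht
  have hjx := jap_pos x; have hjy := jap_pos y; have hjt := japR_pos t
  have hrp : (0:ℝ) < japR t ^ (1 + ε) := Real.rpow_pos_of_pos hjt _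
  have hsplit : japR t ^ ((2:ℝ) + ε) = japR t * japR t ^ (1 + ε) := by
    rw [show (2:ℝ) + ε = 1 + (1 + ε) by ring, Real.rpow_add hjt, Real.rpow_one]
  have hkey : (1 + ‖y‖ ^ 2) * japR t ^ (1 + ε)
      ≤ 2 * (jap x * jap y * japR t ^ ((2:ℝ) + ε)) := by
    have h5 := jap_le x y
    calc (1 + ‖y‖ ^ 2) * japR t ^ (1 + ε)
        = jap y * jap y * japR t ^ (1 + ε) := by rw [jap_sq]
      _ ≤ (2 * (jap x * japR t)) * jap y * japR t ^ (1 + ε) := by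
          have := mul_le_mul_of_nonneg_right (mul_le_mul_of_nonneg_right h5 hjy.le) hrp.le
          linarith [this]
      _ = 2 * (jap x * jap y * (japR t * japR t ^ (1 + ε))) := by ring
      _ = 2 * (jap x * jap y * japR t ^ ((2:ℝ) + ε)) := by rw [hsplit]
  have hd1 : (0:ℝ) < jap x * jap y * japR t ^ ((2:ℝ) + ε) :=
    mul_pos (mul_pos hjx hjy) (Real.rpow_pos_of_pos hjt _)
  have hd2 : (0:ℝ) < (1 + ‖y‖ ^ 2) * japR t ^ (1 + ε) :=
    mul_pos (by positivity) hrp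
  have hmain : C / (jap x * jap y * japR t ^ ((2:ℝ) + ε))
      ≤ C * 2 / ((1 + ‖y‖ ^ 2) * japR t ^ (1 + ε)) := by
    rw [div_le_div_iff₀ hd1 hd2]
    calc C * ((1 + ‖y‖ ^ 2) * japR t ^ (1 + ε))
        ≤ C * (2 * (jap x * jap y * japR t ^ ((2:ℝ) + ε))) :=
          mul_le_mul_of_nonneg_left hkey hC
      _ = C * 2 * (jap x * jap y * japR t ^ ((2:ℝ) + ε)) := by ring
  refine hmain.trans (le_of_eq ?_)
  rw [japR_rpow]
  have hneg : ((1 + t ^ 2) ^ ((1 + ε) / 2))⁻¹ = (1 + t ^ 2) ^ (-(1 + ε) / 2) := by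
    rw [← Real.rpow_neg (by positivity), neg_div]
  rw [← hneg, div_eq_mul_inv, mul_inv]
  ring

lemma lintegral_norm_E3 (g : ℝ → ℝ≥0∞) (hg : Measurable g) :
    ∫⁻ x : E3, g ‖x‖ = (Module.finrank ℝ E3) * volume (Metric.ball (0:E3) 1) *
      ∫⁻ r in Ioi (0:ℝ), ENNReal.ofReal (r ^ (Module.finrank ℝ E3 - 1)) * g r := by
  have h1 : ∫⁻ x : ({0}ᶜ : Set E3), g ‖x.1‖ ∂((volume : Measure E3).comap (↑))
      = ∫⁻ x : E3, g ‖x‖ := by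
    rw [lintegral_subtype_comap (measurableSet_singleton (0:E3)).compl (fun a : E3 => g ‖a‖),
      restrict_compl_singleton]
  have hmeas : Measurable (fun p : Metric.sphere (0:E3) 1 × Ioi (0:ℝ) => g p.2) :=
    hg.comp (measurable_subtype_coe.comp measurable_snd)
  have h2 := (Measure.measurePreserving_homeomorphUnitSphereProd
      (volume : Measure E3)).lintegral_comp
      (f := fun p : Metric.sphere (0:E3) 1 × Ioi (0:ℝ) => g p.2) hmeas
  simp only [homeomorphUnitSphereProd_apply_snd_coe] at h2
  rw [← h1, h2, lintegral_prod _ hmeas.aemeasurable]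
  simp only [lintegral_const, Measure.toSphere_apply_univ]
  rw [Measure.volumeIoiPow, lintegral_withDensity_eq_lintegral_mul _
      ((measurable_subtype_coe.pow_const _).ennreal_ofReal)
      (g := fun y : Ioi (0:ℝ) => g ↑y) (hg.comp measurable_subtype_coe)]
  simp only [Pi.mul_apply]
  rw [show (fun y : Ioi (0:ℝ) => ENNReal.ofReal (↑y ^ (Module.finrank ℝ E3 - 1)) * g ↑y)
      = (fun y : Ioi (0:ℝ) =>
        (fun r : ℝ => ENNReal.ofReal (r ^ (Module.finrank ℝ E3 - 1)) * g r) ↑y) from rfl,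
    lintegral_subtype_comap measurableSet_Ioi
      (fun r : ℝ => ENNReal.ofReal (r ^ (Module.finrank ℝ E3 - 1)) * g r)]
  ring

lemma finite_aux (ε : ℝ) (hε : 0 < ε) :
    ∫⁻ t : ℝ, ENNReal.ofReal ((1 + t ^ 2) ^ (-(1 + ε) / 2)) < ∞ := by
  have hr : (Module.finrank ℝ ℝ : ℝ) < 1 + ε := by
    rw [Module.finrank_self]; norm_num; linarith
  have h := finite_integral_one_add_norm (E := ℝ) (μ := volume) hr
  calc ∫⁻ t : ℝ, ENNReal.ofReal ((1 + t ^ 2) ^ (-(1 + ε) / 2))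
      ≤ ∫⁻ t : ℝ, ENNReal.ofReal ((2:ℝ) ^ ((1+ε)/2) * (1 + ‖t‖) ^ (-(1+ε))) := by
        refine lintegral_mono fun t => ENNReal.ofReal_le_ofReal ?_
        have := rpow_neg_one_add_norm_sq_le (E := ℝ) t (r := 1 + ε) (by linarith)
        simpa [Real.norm_eq_abs, sq_abs] using this
    _ = ENNReal.ofReal ((2:ℝ) ^ ((1+ε)/2)) * ∫⁻ t : ℝ, ENNReal.ofReal ((1 + ‖t‖) ^ (-(1+ε))) := by
        rw [← lintegral_const_mul' _ _ ENNReal.ofReal_ne_top]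
        congr 1 with t
        rw [← ENNReal.ofReal_mul (by positivity)]
    _ < ∞ := ENNReal.mul_lt_top ENNReal.ofReal_lt_top h

lemma schur_int (ε : ℝ) (hε : 0 < ε) : ∃ A : ℝ≥0∞, A ≠ ∞ ∧ ∀ a : ℝ,
    (∫⁻ z : E3, ENNReal.ofReal ((1 + ‖z‖ ^ 2)⁻¹ * (1 + (a - ‖z‖) ^ 2) ^ (-(1 + ε) / 2))) ≤ A := by
  set I := ∫⁻ t : ℝ, ENNReal.ofReal ((1 + t ^ 2) ^ (-(1 + ε) / 2)) with hI
  refine ⟨3 * volume (Metric.ball (0:E3) 1) * I, ?_, fun a => ?_⟩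
  · exact (ENNReal.mul_lt_top (ENNReal.mul_lt_top (by norm_num) measure_ball_lt_top)
      (finite_aux ε hε)).ne
  · have hg : Measurable (fun r : ℝ =>
        ENNReal.ofReal ((1 + r ^ 2)⁻¹ * (1 + (a - r) ^ 2) ^ (-(1 + ε) / 2))) := by
      apply Measurable.ennreal_ofReal
      fun_prop
    rw [lintegral_norm_E3 _ hg]
    have hdim : Module.finrank ℝ E3 = 3 := finrank_euclideanSpace_fin
    rw [hdim]
    have hb : (3:ℝ≥0∞) * volume (Metric.ball (0:E3) 1)
        = ((3:ℕ) : ℝ≥0∞) * volume (Metric.ball (0:E3) 1) := by norm_num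
    rw [← hb]
    simp only [show (3:ℕ)-1 = 2 from rfl]
    gcongr
    calc ∫⁻ r in Ioi (0:ℝ), ENNReal.ofReal (r ^ 2) *
            ENNReal.ofReal ((1 + r ^ 2)⁻¹ * (1 + (a - r) ^ 2) ^ (-(1 + ε) / 2))
        ≤ ∫⁻ r in Ioi (0:ℝ), ENNReal.ofReal ((1 + (a - r) ^ 2) ^ (-(1 + ε) / 2)) := by
          refine setLIntegral_mono' measurableSet_Ioi fun r _ => ?_
          rw [← ENNReal.ofReal_mul (by positivity)]
          refine ENNReal.ofReal_le_ofReal ?_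
          have h1 : r ^ 2 * (1 + r ^ 2)⁻¹ ≤ 1 := by
            rw [← div_eq_mul_inv, div_le_one (by positivity)]; linarith
          calc r ^ 2 * ((1 + r ^ 2)⁻¹ * (1 + (a - r) ^ 2) ^ (-(1 + ε) / 2))
              = (r ^ 2 * (1 + r ^ 2)⁻¹) * (1 + (a - r) ^ 2) ^ (-(1 + ε) / 2) := by ring
            _ ≤ 1 * (1 + (a - r) ^ 2) ^ (-(1 + ε) / 2) :=
                mul_le_mul_of_nonneg_right h1 (by positivity)
            _ = (1 + (a - r) ^ 2) ^ (-(1 + ε) / 2) := one_mul _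
      _ ≤ ∫⁻ r : ℝ, ENNReal.ofReal ((1 + (a - r) ^ 2) ^ (-(1 + ε) / 2)) :=
          setLIntegral_le_lintegral _ _
      _ = I := by
          rw [hI]
          have h : ∀ r : ℝ, ENNReal.ofReal ((1 + (a - r) ^ 2) ^ (-(1 + ε) / 2))
              = (fun s : ℝ => ENNReal.ofReal ((1 + s ^ 2) ^ (-(1 + ε) / 2))) (r - a) := by
            intro r; simp only; rw [show (a - r)^2 = (r - a)^2 by ring]
          simp_rw [h]
          exact lintegral_sub_right_eq_self
            (fun s : ℝ => ENNReal.ofReal ((1 + s ^ 2) ^ (-(1 + ε) / 2))) a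

theorem stmt0 (ε : ℝ) (hε : 0 < ε) (K : E3 → E3 → ℂ)
    (hKmeas : Measurable (Function.uncurry K)) (C : ℝ)
    (hK : ∀ x y : E3, ‖K x y‖ ≤ C / (jap x * jap y * japR (‖x‖ - ‖y‖) ^ (2 + ε))) :
    ∀ p : ℝ≥0∞, 1 ≤ p →
      ∃ C' : ℝ, 0 ≤ C' ∧ ∀ f : E3 → ℂ, MemLp f p volume →
        (∀ᵐ x : E3, Integrable (fun y => K x y * f y)) ∧
        eLpNorm (fun x => ∫ y : E3, K x y * f y) p volume
          ≤ ENNReal.ofReal C' * eLpNorm f p volume := by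
  intro p hp
  -- C is nonnegative
  have hC : 0 ≤ C := by
    have h0 := hK 0 0
    have hd : 0 < jap (0:E3) * jap 0 * japR (‖(0:E3)‖ - ‖(0:E3)‖) ^ ((2:ℝ) + ε) :=
      mul_pos (mul_pos (jap_pos 0) (jap_pos 0)) (Real.rpow_pos_of_pos (japR_pos _) _)
    have h1 : 0 ≤ C / (jap (0:E3) * jap 0 * japR (‖(0:E3)‖ - ‖(0:E3)‖) ^ ((2:ℝ) + ε)) :=
      le_trans (norm_nonneg _) h0
    have h2 := mul_nonneg h1 hd.le
    rwa [div_mul_cancel₀ _ hd.ne'] at h2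
  set N : E3 → E3 → ℝ≥0∞ := fun x y => (‖K x y‖₊ : ℝ≥0∞) with hN
  have hNmeas : Measurable (fun z : E3 × E3 => N z.1 z.2) := hKmeas.enorm
  have hNx : ∀ x, Measurable (N x) := fun x => hKmeas.of_uncurry_left.enorm
  have hNy : ∀ y, Measurable (fun x => N x y) := fun y => hKmeas.of_uncurry_right.enorm
  obtain ⟨A₀, hA₀, hA₀le⟩ := schur_int ε hε
  set A : ℝ≥0∞ := ENNReal.ofReal (2 * C) * A₀ with hA
  have hAfin : A ≠ ∞ := ENNReal.mul_ne_top ENNReal.ofReal_ne_top hA₀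
  have hNbd1 : ∀ x y, N x y ≤ ENNReal.ofReal (2 * C) *
      ENNReal.ofReal ((1 + ‖y‖ ^ 2)⁻¹ * (1 + (‖x‖ - ‖y‖) ^ 2) ^ (-(1 + ε) / 2)) := by
    intro x y
    calc N x y = ENNReal.ofReal ‖K x y‖ := (ofReal_norm (K x y)).symm
      _ ≤ ENNReal.ofReal (2 * C *
            ((1 + ‖y‖ ^ 2)⁻¹ * (1 + (‖x‖ - ‖y‖) ^ 2) ^ (-(1 + ε) / 2))) :=
          ENNReal.ofReal_le_ofReal ((hK x y).trans (ker_ptwise ε C hC x y))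
      _ = _ := ENNReal.ofReal_mul (by linarith)
  have hNbd2 : ∀ x y, N x y ≤ ENNReal.ofReal (2 * C) *
      ENNReal.ofReal ((1 + ‖x‖ ^ 2)⁻¹ * (1 + (‖y‖ - ‖x‖) ^ 2) ^ (-(1 + ε) / 2)) := by
    intro x y
    have hsym : C / (jap y * jap x * japR (‖y‖ - ‖x‖) ^ (2 + ε))
        = C / (jap x * jap y * japR (‖x‖ - ‖y‖) ^ (2 + ε)) := by
      rw [show japR (‖y‖ - ‖x‖) = japR (‖x‖ - ‖y‖) by
        rw [japR, japR]; congr 1; ring, mul_comm (jap y)]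
    calc N x y = ENNReal.ofReal ‖K x y‖ := (ofReal_norm (K x y)).symm
      _ ≤ ENNReal.ofReal (2 * C *
            ((1 + ‖x‖ ^ 2)⁻¹ * (1 + (‖y‖ - ‖x‖) ^ 2) ^ (-(1 + ε) / 2))) :=
          ENNReal.ofReal_le_ofReal ((hK x y).trans (hsym ▸ ker_ptwise ε C hC y x))
      _ = _ := ENNReal.ofReal_mul (by linarith)
  have hrow : ∀ x, ∫⁻ y, N x y ≤ A := by
    intro x
    calc ∫⁻ y, N x y
        ≤ ∫⁻ y, ENNReal.ofReal (2 * C) *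
            ENNReal.ofReal ((1 + ‖y‖ ^ 2)⁻¹ * (1 + (‖x‖ - ‖y‖) ^ 2) ^ (-(1 + ε) / 2)) :=
          lintegral_mono (hNbd1 x)
      _ = ENNReal.ofReal (2 * C) * ∫⁻ y,
            ENNReal.ofReal ((1 + ‖y‖ ^ 2)⁻¹ * (1 + (‖x‖ - ‖y‖) ^ 2) ^ (-(1 + ε) / 2)) :=
          lintegral_const_mul' _ _ ENNReal.ofReal_ne_top
      _ ≤ A := by rw [hA]; exact mul_le_mul_right (hA₀le ‖x‖) _
  have hcol : ∀ y, ∫⁻ x, N x y ≤ A := by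
    intro y
    calc ∫⁻ x, N x y
        ≤ ∫⁻ x, ENNReal.ofReal (2 * C) *
            ENNReal.ofReal ((1 + ‖x‖ ^ 2)⁻¹ * (1 + (‖y‖ - ‖x‖) ^ 2) ^ (-(1 + ε) / 2)) :=
          lintegral_mono (fun x => hNbd2 x y)
      _ = ENNReal.ofReal (2 * C) * ∫⁻ x,
            ENNReal.ofReal ((1 + ‖x‖ ^ 2)⁻¹ * (1 + (‖y‖ - ‖x‖) ^ 2) ^ (-(1 + ε) / 2)) :=
          lintegral_const_mul' _ _ ENNReal.ofReal_ne_top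
      _ ≤ A := by rw [hA]; exact mul_le_mul_right (hA₀le ‖y‖) _
  clear_value A
  refine ⟨A.toReal, ENNReal.toReal_nonneg, fun f hf => ?_⟩
  rw [ENNReal.ofReal_toReal hAfin]
  -- measurable representative
  obtain ⟨g, hgsm, hfg⟩ := hf.aestronglyMeasurable
  have hgm : Measurable g := hgsm.measurable
  set G : E3 → ℝ≥0∞ := fun y => (‖g y‖₊ : ℝ≥0∞) with hGdef
  have hGmeas : Measurable G := hgm.enorm
  have hFG : (fun y => ((‖f y‖₊ : ℝ≥0∞))) =ᵐ[volume] G := by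
    filter_upwards [hfg] with y hy
    rw [hGdef]; simp [hy]
  set φ : E3 → ℝ≥0∞ := fun x => ∫⁻ y, N x y * G y with hφdef
  have hφmeas : Measurable φ :=
    (hNmeas.mul (hGmeas.comp measurable_snd)).lintegral_prod_right'
  have hφf : ∀ x, (∫⁻ y, ((‖K x y * f y‖₊ : ℝ≥0∞))) = φ x := by
    intro x
    rw [hφdef]
    refine lintegral_congr_ae ?_
    filter_upwards [hfg] with y hy
    rw [hGdef, hN]
    simp [nnnorm_mul, ENNReal.coe_mul, hy]
  have hsm : AEStronglyMeasurable (fun x => ∫ y, K x y * f y) volume :=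
    ((hKmeas.stronglyMeasurable.aestronglyMeasurable).mul
      (hf.aestronglyMeasurable.comp_quasiMeasurePreserving
        Measure.quasiMeasurePreserving_snd)).integral_prod_right'
  have hKf : ∀ x, ((‖∫ y, K x y * f y‖₊ : ℝ≥0∞)) ≤ φ x := fun x =>
    (enorm_integral_le_lintegral_enorm _).trans (le_of_eq (hφf x))
  have hswap : ∀ (G' : E3 → ℝ≥0∞), Measurable G' →
      ∫⁻ x, ∫⁻ y, N x y * G' y ≤ A * ∫⁻ y, G' y := by
    intro G' hG'
    rw [lintegral_lintegral_swap ((hNmeas.mul (hG'.comp measurable_snd)).aemeasurable)]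
    calc ∫⁻ y, ∫⁻ x, N x y * G' y
        = ∫⁻ y, (∫⁻ x, N x y) * G' y :=
          lintegral_congr fun y => lintegral_mul_const (G' y) (hNy y)
      _ ≤ ∫⁻ y, A * G' y := lintegral_mono fun y => mul_le_mul_left (hcol y) _
      _ = A * ∫⁻ y, G' y := lintegral_const_mul' _ _ hAfin
  have hint : (∀ᵐ x : E3, φ x < ∞) → ∀ᵐ x : E3, Integrable (fun y => K x y * f y) := by
    intro h
    filter_upwards [h] with x hx
    refine ⟨(hKmeas.of_uncurry_left.aestronglyMeasurable).mul hf.aestronglyMeasurable, ?_⟩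
    show (∫⁻ y, ((‖K x y * f y‖₊ : ℝ≥0∞))) < ∞
    rw [hφf x]; exact hx
  rcases eq_or_lt_of_le hp with hp1 | hp1
  · -- p = 1
    subst hp1
    have htot : ∫⁻ x, φ x ≤ A * eLpNorm f 1 volume := by
      rw [eLpNorm_one_eq_lintegral_enorm]
      calc ∫⁻ x, φ x ≤ A * ∫⁻ y, G y := hswap G hGmeas
        _ = A * ∫⁻ y, ((‖f y‖₊ : ℝ≥0∞)) := by rw [lintegral_congr_ae hFG.symm]
    have hfin : ∫⁻ x, φ x ≠ ∞ :=
      (lt_of_le_of_lt htot (ENNReal.mul_lt_top hAfin.lt_top hf.2)).ne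
    refine ⟨hint (ae_lt_top hφmeas hfin), ?_⟩
    rw [eLpNorm_one_eq_lintegral_enorm]
    calc ∫⁻ x, ((‖∫ y, K x y * f y‖₊ : ℝ≥0∞)) ≤ ∫⁻ x, φ x := lintegral_mono hKf
      _ ≤ A * eLpNorm f 1 volume := htot
  rcases eq_or_ne p ∞ with hptop | hptop
  · -- p = ∞
    subst hptop
    have hSfin : eLpNormEssSup f volume < ∞ := by
      have := hf.2; rwa [eLpNorm_exponent_top] at this
    have hGS : ∀ᵐ y : E3, G y ≤ eLpNormEssSup f volume := by
      filter_upwards [hFG, enorm_ae_le_eLpNormEssSup f volume] with y h1 h2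
      rw [← h1]; exact h2
    have hφbd : ∀ x, φ x ≤ A * eLpNormEssSup f volume := by
      intro x
      calc φ x ≤ ∫⁻ y, N x y * eLpNormEssSup f volume :=
            lintegral_mono_ae (hGS.mono fun y hy => mul_le_mul_right hy _)
        _ = (∫⁻ y, N x y) * eLpNormEssSup f volume := lintegral_mul_const _ (hNx x)
        _ ≤ A * eLpNormEssSup f volume := mul_le_mul_left (hrow x) _
    refine ⟨hint (Filter.Eventually.of_forall fun x =>
      lt_of_le_of_lt (hφbd x) (ENNReal.mul_lt_top hAfin.lt_top hSfin)), ?_⟩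
    rw [eLpNorm_exponent_top, eLpNorm_exponent_top]
    exact essSup_le_of_ae_le _ (Filter.Eventually.of_forall fun x => (hKf x).trans (hφbd x))
  · -- 1 < p < ∞
    have hp0ne : p ≠ 0 := (zero_lt_one.trans_le hp).ne'
    set pr := p.toReal with hpr
    have hpr1 : 1 < pr := by
      rw [hpr, ← ENNReal.toReal_one]
      exact (ENNReal.toReal_lt_toReal ENNReal.one_ne_top hptop).mpr hp1
    have hpr0 : 0 < pr := lt_trans one_pos hpr1
    set q := Real.conjExponent pr with hq
    have hpq : pr.HolderConjugate q := Real.HolderConjugate.conjExponent hpr1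
    have hq0 : q ≠ 0 := hpq.symm.ne_zero
    have hinv : 1 / q + 1 / pr = 1 := by
      have := hpq.symm.inv_add_inv_eq_inv; rw [inv_one] at this
      rwa [one_div, one_div]
    set ψ : E3 → ℝ≥0∞ := fun x => ∫⁻ y, N x y * G y ^ pr with hψdef
    have hGpr : Measurable (fun y => G y ^ pr) :=
      ENNReal.continuous_rpow_const.measurable.comp hGmeas
    have hholder : ∀ x, φ x ≤ A ^ (1/q) * ψ x ^ (1/pr) := by
      intro x
      have h1 : φ x = ∫⁻ y, ((fun y => N x y ^ (1/q)) * (fun y => N x y ^ (1/pr) * G y)) y := by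
        refine lintegral_congr fun y => ?_
        simp only [Pi.mul_apply]
        rw [← mul_assoc, ← ENNReal.rpow_add_of_nonneg _ _ hpq.symm.one_div_nonneg
          hpq.one_div_nonneg, hinv, ENNReal.rpow_one]
      have h2 := ENNReal.lintegral_mul_le_Lp_mul_Lq volume hpq.symm
        (f := fun y => N x y ^ (1/q)) (g := fun y => N x y ^ (1/pr) * G y)
        ((ENNReal.continuous_rpow_const.measurable.comp (hNx x)).aemeasurable)
        (((ENNReal.continuous_rpow_const.measurable.comp (hNx x)).mul hGmeas).aemeasurable)
      rw [h1]
      refine h2.trans ?_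
      have e1 : ∫⁻ y, (N x y ^ (1/q)) ^ q = ∫⁻ y, N x y := by
        refine lintegral_congr fun y => ?_
        rw [← ENNReal.rpow_mul, one_div_mul_cancel hq0, ENNReal.rpow_one]
      have e2 : ∫⁻ y, (N x y ^ (1/pr) * G y) ^ pr = ψ x := by
        rw [hψdef]
        refine lintegral_congr fun y => ?_
        rw [ENNReal.mul_rpow_of_nonneg _ _ hpr0.le, ← ENNReal.rpow_mul,
          one_div_mul_cancel hpr0.ne', ENNReal.rpow_one]
      rw [e1, e2]
      exact mul_le_mul_left (ENNReal.rpow_le_rpow (hrow x) hpq.symm.one_div_nonneg) _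
    have hmono : ∀ x, φ x ^ pr ≤ A ^ (1/q * pr) * ψ x := by
      intro x
      calc φ x ^ pr ≤ (A ^ (1/q) * ψ x ^ (1/pr)) ^ pr :=
            ENNReal.rpow_le_rpow (hholder x) hpr0.le
        _ = A ^ (1/q * pr) * ψ x := by
            rw [ENNReal.mul_rpow_of_nonneg _ _ hpr0.le, ← ENNReal.rpow_mul,
              ← ENNReal.rpow_mul, one_div_mul_cancel hpr0.ne', ENNReal.rpow_one]
    have hGprf : ∫⁻ y, G y ^ pr = (eLpNorm f p volume) ^ pr := by
      have h1 : ∫⁻ y, G y ^ pr = ∫⁻ y, ((‖f y‖₊ : ℝ≥0∞)) ^ pr := by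
        refine lintegral_congr_ae ?_
        filter_upwards [hFG] with y hy
        exact congrArg (· ^ pr) hy.symm
      rw [h1, eLpNorm_eq_lintegral_rpow_enorm_toReal hp0ne hptop, ← ENNReal.rpow_mul,
        one_div_mul_cancel hpr0.ne', ENNReal.rpow_one]; rfl
    have htot : ∫⁻ x, φ x ^ pr ≤ A ^ (1/q * pr) * (A * (eLpNorm f p volume) ^ pr) := by
      calc ∫⁻ x, φ x ^ pr ≤ ∫⁻ x, A ^ (1/q * pr) * ψ x := lintegral_mono hmono
        _ = A ^ (1/q * pr) * ∫⁻ x, ψ x :=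
            lintegral_const_mul' _ _ (ENNReal.rpow_ne_top_of_nonneg (mul_nonneg hpq.symm.one_div_nonneg hpr0.le) hAfin)
        _ ≤ A ^ (1/q * pr) * (A * (eLpNorm f p volume) ^ pr) := by
            rw [← hGprf]
            exact mul_le_mul_right (hswap _ hGpr) _
    have hfin : ∫⁻ x, φ x ^ pr ≠ ∞ := by
      refine (lt_of_le_of_lt htot ?_).ne
      refine ENNReal.mul_lt_top ?_ (ENNReal.mul_lt_top hAfin.lt_top ?_)
      · exact ENNReal.rpow_lt_top_of_nonneg (mul_nonneg hpq.symm.one_div_nonneg hpr0.le) hAfin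
      · exact ENNReal.rpow_lt_top_of_nonneg hpr0.le hf.2.ne
    have hφae : ∀ᵐ x : E3, φ x < ∞ := by
      filter_upwards [ae_lt_top (ENNReal.continuous_rpow_const.measurable.comp hφmeas) hfin]
        with x hx
      exact (ENNReal.rpow_lt_top_iff_of_pos hpr0).mp hx
    refine ⟨hint hφae, ?_⟩
    rw [eLpNorm_eq_lintegral_rpow_enorm_toReal hp0ne hptop]
    calc (∫⁻ x, ((‖∫ y, K x y * f y‖₊ : ℝ≥0∞)) ^ pr) ^ (1/pr)
        ≤ (∫⁻ x, φ x ^ pr) ^ (1/pr) := by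
          gcongr with x
          exact hKf x
      _ ≤ (A ^ (1/q * pr) * (A * (eLpNorm f p volume) ^ pr)) ^ (1/pr) :=
          ENNReal.rpow_le_rpow htot hpq.one_div_nonneg
      _ = A * eLpNorm f p volume := by
          rw [ENNReal.mul_rpow_of_nonneg (A ^ (1/q * pr)) _ hpq.one_div_nonneg,
            ENNReal.mul_rpow_of_nonneg A _ hpq.one_div_nonneg,
            ← ENNReal.rpow_mul A (1/q * pr) (1/pr),
            ← ENNReal.rpow_mul (eLpNorm f p volume) pr (1/pr),
            show 1/q * pr * (1/pr) = 1/q by rw [mul_assoc, mul_one_div, div_self hpr0.ne', mul_one],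
            show pr * (1/pr) = 1 from mul_one_div_cancel hpr0.ne', ENNReal.rpow_one,
            ← mul_assoc, ← ENNReal.rpow_add_of_nonneg _ _ hpq.symm.one_div_nonneg
              hpq.one_div_nonneg, hinv, ENNReal.rpow_one]


end
end

section
/- For x, z ∈ ℝ³ with x ≠ z, and λ > 0, define G(λ, x, z) = (e^{iλ(|x−z| − |x|)} − 1)·(1 − e^{(−1−i)λ|x−z|}) / (8π λ |x−z|). Then there is a constant C such that for all 0 < λ ≤ 1, all x ≠ z, and each k = 0, 1, 2, the k-th partial derivative in λ satisfies |∂_λ^k G(λ, x, z)| ≤ C ⟨z⟩^{k+1} / (|x−z| λ^k). -/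
open MeasureTheory Real Set Complex

noncomputable section

/-- The auxiliary function `G(λ, x, z)`. -/
def G (l : ℝ) (x z : E3) : ℂ :=
  (Complex.exp (Complex.I * l * (‖x - z‖ - ‖x‖)) - 1) *
    (1 - Complex.exp ((-1 - Complex.I) * l * ‖x - z‖)) / (8 * Real.pi * l * ‖x - z‖)

/- auxiliary complex functions -/
def su (a : ℝ) (s : ℂ) : ℂ := Complex.exp (Complex.I * s * (a : ℂ)) - 1
def sv (r : ℝ) (s : ℂ) : ℂ := 1 - Complex.exp ((-1 - Complex.I) * s * (r : ℂ))
def sN (r : ℝ) (s : ℂ) : ℂ := 8 * (Real.pi : ℂ) * s * (r : ℂ)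
def sU (a : ℝ) (s : ℂ) : ℂ := Complex.exp (Complex.I * s * (a : ℂ)) * (Complex.I * (a : ℂ))
def sW (r : ℝ) (s : ℂ) : ℂ :=
  Complex.exp ((-1 - Complex.I) * s * (r : ℂ)) * ((-1 - Complex.I) * (r : ℂ))
def sNp (r : ℝ) : ℂ := 8 * (Real.pi : ℂ) * (r : ℂ)
def sQv (a r : ℝ) (s : ℂ) : ℂ := sU a s * sv r s + su a s * -sW r s
def sQd (a r : ℝ) (s : ℂ) : ℂ :=
  sU a s * (Complex.I * (a : ℂ)) * sv r s + sU a s * -sW r s +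
    (sU a s * -sW r s + su a s * -(sW r s * ((-1 - Complex.I) * (r : ℂ))))
def sg1 (a r : ℝ) (s : ℂ) : ℂ :=
  (sQv a r s * sN r s - su a s * sv r s * sNp r) / sN r s ^ 2
def sPd (a r : ℝ) (s : ℂ) : ℂ := sQd a r s * sN r s + sQv a r s * sNp r - sQv a r s * sNp r
def sg2 (a r : ℝ) (s : ℂ) : ℂ :=
  (sPd a r s * sN r s ^ 2 -
      (sQv a r s * sN r s - su a s * sv r s * sNp r) * (2 * sN r s * sNp r)) /
    (sN r s ^ 2) ^ 2

lemma hasDerivAt_su (a : ℝ) (s : ℂ) : HasDerivAt (su a) (sU a s) s := by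
  have h0 : HasDerivAt (fun s : ℂ => Complex.I * s * (a : ℂ)) (Complex.I * (a : ℂ)) s := by
    simpa using ((hasDerivAt_id s).const_mul Complex.I).mul_const (a : ℂ)
  exact h0.cexp.sub_const 1

lemma hasDerivAt_sU (a : ℝ) (s : ℂ) : HasDerivAt (sU a) (sU a s * (Complex.I * (a : ℂ))) s := by
  have h0 : HasDerivAt (fun s : ℂ => Complex.I * s * (a : ℂ)) (Complex.I * (a : ℂ)) s := by
    simpa using ((hasDerivAt_id s).const_mul Complex.I).mul_const (a : ℂ)
  exact h0.cexp.mul_const _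

lemma hasDerivAt_exp2 (r : ℝ) (s : ℂ) :
    HasDerivAt (fun s : ℂ => Complex.exp ((-1 - Complex.I) * s * (r : ℂ))) (sW r s) s := by
  have h0 : HasDerivAt (fun s : ℂ => (-1 - Complex.I) * s * (r : ℂ))
      ((-1 - Complex.I) * (r : ℂ)) s := by
    simpa using ((hasDerivAt_id s).const_mul (-1 - Complex.I)).mul_const (r : ℂ)
  exact h0.cexp

lemma hasDerivAt_sv (r : ℝ) (s : ℂ) : HasDerivAt (sv r) (-sW r s) s :=
  (hasDerivAt_exp2 r s).const_sub 1

lemma hasDerivAt_sW (r : ℝ) (s : ℂ) :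
    HasDerivAt (sW r) (sW r s * ((-1 - Complex.I) * (r : ℂ))) s :=
  (hasDerivAt_exp2 r s).mul_const _

lemma hasDerivAt_sN (r : ℝ) (s : ℂ) : HasDerivAt (sN r) (sNp r) s := by
  exact (by simpa using ((hasDerivAt_id s).const_mul (8 * (Real.pi : ℂ))).mul_const (r : ℂ) :
    HasDerivAt (fun y : ℂ => 8 * (Real.pi : ℂ) * y * (r : ℂ)) (8 * (Real.pi : ℂ) * (r : ℂ)) s)

lemma sN_ne (r : ℝ) (hr : r ≠ 0) (s : ℂ) (hs : s ≠ 0) : sN r s ≠ 0 := by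
  simp only [sN]
  refine mul_ne_zero (mul_ne_zero (mul_ne_zero ?_ ?_) hs) ?_
  · norm_num
  · exact_mod_cast Real.pi_ne_zero
  · exact_mod_cast hr

lemma hasDerivAt_sF (a r : ℝ) (hr : r ≠ 0) (s : ℂ) (hs : s ≠ 0) :
    HasDerivAt (fun s : ℂ => su a s * sv r s / sN r s) (sg1 a r s) s :=
  ((hasDerivAt_su a s).mul (hasDerivAt_sv r s)).div (hasDerivAt_sN r s) (sN_ne r hr s hs)

lemma hasDerivAt_sQv (a r : ℝ) (s : ℂ) : HasDerivAt (sQv a r) (sQd a r s) s :=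
  ((hasDerivAt_sU a s).mul (hasDerivAt_sv r s)).add
    ((hasDerivAt_su a s).mul (hasDerivAt_sW r s).neg)

lemma hasDerivAt_sg1 (a r : ℝ) (hr : r ≠ 0) (s : ℂ) (hs : s ≠ 0) :
    HasDerivAt (sg1 a r) (sg2 a r s) s := by
  have h1 : HasDerivAt (fun s : ℂ => sQv a r s * sN r s - su a s * sv r s * sNp r)
      (sPd a r s) s :=
    ((hasDerivAt_sQv a r s).mul (hasDerivAt_sN r s)).sub
      (((hasDerivAt_su a s).mul (hasDerivAt_sv r s)).mul_const (sNp r))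
  have h2 : HasDerivAt (fun s : ℂ => sN r s ^ 2) (2 * sN r s * sNp r) s := by
    simpa using (hasDerivAt_sN r s).fun_pow 2
  exact h1.div h2 (pow_ne_zero 2 (sN_ne r hr s hs))

lemma exp_aux1 (x : ℝ) (hx : 0 ≤ x) : x * Real.exp (-x) ≤ 1 := by
  rw [Real.exp_neg]
  rw [mul_inv_le_iff₀ (Real.exp_pos x)]
  simpa using Real.add_one_le_exp x |>.trans' (by linarith)

lemma exp_aux2 (x : ℝ) (hx : 0 ≤ x) : x ^ 2 * Real.exp (-x) ≤ 4 := by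
  have h : x ≤ 2 * Real.exp (x / 2) := by
    have := Real.add_one_le_exp (x / 2)
    nlinarith [Real.exp_pos (x / 2)]
  have h2 : x ^ 2 ≤ 4 * Real.exp x := by
    have hx2 : Real.exp (x/2) * Real.exp (x/2) = Real.exp x := by
      rw [← Real.exp_add]; ring_nf
    nlinarith [Real.exp_pos (x/2)]
  rw [Real.exp_neg]
  rw [mul_inv_le_iff₀ (Real.exp_pos x)]
  linarith

set_option maxHeartbeats 1600000 in
theorem stmt6 :
    ∃ C : ℝ, ∀ (l : ℝ), 0 < l → l ≤ 1 → ∀ (x z : E3), x ≠ z → ∀ k : ℕ, k ≤ 2 →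
      ‖iteratedDeriv k (fun t : ℝ => G t x z) l‖
        ≤ C * jap z ^ (k + 1) / (‖x - z‖ * l ^ k) := by
  use 100
  intro l hl hl1 x z hxz k hk
  have hZ1' : 1 ≤ jap z := by
    rw [jap]
    nlinarith [Real.sq_sqrt (show (0:ℝ) ≤ 1 + ‖z‖ ^ 2 by positivity),
      Real.sqrt_nonneg (1 + ‖z‖ ^ 2), sq_nonneg ‖z‖]
  have haZ' : |‖x - z‖ - ‖x‖| ≤ jap z := by
    have h1 : |‖x - z‖ - ‖x‖| ≤ ‖z‖ := by
      have := abs_norm_sub_norm_le (x - z) x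
      simpa using this
    refine h1.trans ?_
    rw [jap]
    nlinarith [Real.sq_sqrt (show (0:ℝ) ≤ 1 + ‖z‖ ^ 2 by positivity),
      Real.sqrt_nonneg (1 + ‖z‖ ^ 2), norm_nonneg z]
  have hr' : 0 < ‖x - z‖ := by rw [norm_pos_iff]; exact sub_ne_zero.mpr hxz
  obtain ⟨r, hrdef⟩ : ∃ r : ℝ, ‖x - z‖ = r := ⟨_, rfl⟩
  obtain ⟨nx, hnxdef⟩ : ∃ nx : ℝ, ‖x‖ = nx := ⟨_, rfl⟩
  obtain ⟨Z, hZdef⟩ : ∃ Z : ℝ, jap z = Z := ⟨_, rfl⟩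
  obtain ⟨a, hadef⟩ : ∃ a : ℝ, r - nx = a := ⟨_, rfl⟩
  have hr : 0 < r := hrdef ▸ hr'
  have hZ1 : 1 ≤ Z := hZdef ▸ hZ1'
  have hZ0 : 0 < Z := lt_of_lt_of_le one_pos hZ1
  have hZ12 : Z ≤ Z ^ 2 := by nlinarith [hZ1]
  have hZ13 : Z ≤ Z ^ 3 := by nlinarith [hZ1]
  have hZ23 : Z ^ 2 ≤ Z ^ 3 := by nlinarith [hZ1]
  have haZ : |a| ≤ Z := by rw [← hadef, ← hrdef, ← hnxdef, ← hZdef]; exact haZ'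
  -- rewrite the function
  have hfeq : (fun t : ℝ => G t x z) = fun t : ℝ => su a ↑t * sv r ↑t / sN r ↑t := by
    funext t
    simp only [G, su, sv, sN]
    rw [hrdef, hnxdef]
    rw [show ((r : ℂ) - (nx : ℂ)) = ((a : ℝ) : ℂ) from by rw [← hadef]; push_cast; ring]
  rw [hfeq, hrdef, hZdef]
  -- norms of building blocks at the real point l
  have hEa : ‖Complex.exp (Complex.I * (l : ℂ) * (a : ℂ))‖ = 1 := by
    simp [Complex.norm_exp]
  have hEb : ‖Complex.exp ((-1 - Complex.I) * (l : ℂ) * (r : ℂ))‖ = Real.exp (-(l * r)) := by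
    simp [Complex.norm_exp]
  have hexple : Real.exp (-(l * r)) ≤ 1 := by
    rw [Real.exp_le_one_iff]
    exact neg_nonpos.mpr (by positivity)
  have hmoda : ‖Complex.I * (l : ℂ) * (a : ℂ)‖ = l * |a| := by
    simp [map_mul, Complex.norm_I, Complex.norm_real, abs_of_pos hl]
  have hkey1 : r * Real.exp (-(l * r)) ≤ 1 / l := by
    have h := exp_aux1 (l * r) (by positivity)
    rw [le_div_iff₀ hl]
    exact le_trans (le_of_eq (by ring)) h
  have hkey2 : r ^ 2 * Real.exp (-(l * r)) ≤ 4 / l ^ 2 := by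
    have h := exp_aux2 (l * r) (by positivity)
    rw [le_div_iff₀ (by positivity : (0:ℝ) < l ^ 2)]
    exact le_trans (le_of_eq (by ring)) h
  have hnu : ‖su a ↑l‖ ≤ 2 * (l * Z) := by
    rcases le_or_gt (l * |a|) 1 with h | h
    · have h1 : ‖(Complex.I * (l : ℂ) * (a : ℂ))‖ ≤ 1 := by
        rw [hmoda]; exact h
      have h2 := Complex.norm_exp_sub_one_le h1
      calc ‖su a ↑l‖ = ‖(Complex.exp (Complex.I * (l:ℂ) * (a:ℂ)) - 1)‖ := rfl
        _ ≤ 2 * ‖(Complex.I * (l:ℂ) * (a:ℂ))‖ := h2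
        _ = 2 * (l * |a|) := by rw [hmoda]
        _ ≤ 2 * (l * Z) :=
          mul_le_mul_of_nonneg_left (mul_le_mul_of_nonneg_left haZ hl.le)
            (by norm_num : (0:ℝ) ≤ 2)
    · calc ‖su a ↑l‖ ≤ ‖Complex.exp (Complex.I * (l:ℂ) * (a:ℂ))‖ + ‖(1:ℂ)‖ :=
          norm_sub_le _ _
        _ = 2 := by rw [hEa]; norm_num
        _ ≤ 2 * (l * Z) := by
          have hla : 1 ≤ l * |a| := by
            have := hmoda ▸ h
            linarith [this]
          have h2 : 1 ≤ l * Z := hla.trans (mul_le_mul_of_nonneg_left haZ hl.le)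
          exact le_mul_of_one_le_right (by norm_num) h2
  have hnv : ‖sv r ↑l‖ ≤ 2 := by
    calc ‖sv r ↑l‖ ≤ ‖(1:ℂ)‖ + ‖Complex.exp ((-1 - Complex.I) * (l:ℂ) * (r:ℂ))‖ :=
        norm_sub_le _ _
      _ ≤ 2 := by rw [hEb]; simp only [norm_one]; linarith
  have hnU : ‖sU a ↑l‖ ≤ Z := by
    rw [sU, norm_mul, hEa, one_mul, norm_mul]
    simp only [Complex.norm_I, Complex.norm_real, Real.norm_eq_abs, one_mul]
    exact haZ
  have hnb : ‖(-1 - Complex.I : ℂ)‖ ≤ 2 := by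
    calc ‖(-1 - Complex.I : ℂ)‖ ≤ ‖(-1 : ℂ)‖ + ‖Complex.I‖ := norm_sub_le _ _
      _ = 2 := by norm_num [Complex.norm_I]
  have hnW0 : ‖sW r ↑l‖ ≤ Real.exp (-(l * r)) * (2 * r) := by
    rw [sW, norm_mul, norm_mul, hEb, Complex.norm_real, Real.norm_eq_abs, abs_of_pos hr]
    have h1 : ‖(-1 - Complex.I : ℂ)‖ * r ≤ 2 * r := mul_le_mul_of_nonneg_right hnb hr.le
    exact mul_le_mul_of_nonneg_left h1 (Real.exp_pos _).le
  have hnW : ‖sW r ↑l‖ ≤ 2 / l := by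
    refine hnW0.trans ?_
    calc Real.exp (-(l * r)) * (2 * r) = 2 * (r * Real.exp (-(l * r))) := by ring
      _ ≤ 2 * (1 / l) := mul_le_mul_of_nonneg_left hkey1 (by norm_num)
      _ = 2 / l := by ring
  have hnW' : ‖sW r ↑l * ((-1 - Complex.I) * (r : ℂ))‖ ≤ 16 / l ^ 2 := by
    rw [norm_mul, norm_mul]
    calc ‖sW r ↑l‖ * (‖(-1 - Complex.I : ℂ)‖ * ‖((r:ℝ) : ℂ)‖)
        ≤ (Real.exp (-(l * r)) * (2 * r)) * (2 * r) := by
          rw [Complex.norm_real, Real.norm_eq_abs, abs_of_pos hr]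
          have h1 : ‖(-1 - Complex.I : ℂ)‖ * r ≤ 2 * r :=
            mul_le_mul_of_nonneg_right hnb hr.le
          have h0 : (0:ℝ) ≤ ‖(-1 - Complex.I : ℂ)‖ * r := by positivity
          exact mul_le_mul hnW0 h1 h0 (by positivity)
      _ = 4 * (r ^ 2 * Real.exp (-(l * r))) := by ring
      _ ≤ 4 * (4 / l ^ 2) := mul_le_mul_of_nonneg_left hkey2 (by norm_num)
      _ = 16 / l ^ 2 := by ring
  have hnIa : ‖(Complex.I * (a : ℂ))‖ ≤ Z := by
    rw [norm_mul]
    simp only [Complex.norm_I, Complex.norm_real, Real.norm_eq_abs, one_mul]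
    exact haZ
  have hnU' : ‖sU a ↑l * (Complex.I * (a : ℂ))‖ ≤ Z ^ 2 := by
    rw [norm_mul, pow_two]
    exact mul_le_mul hnU hnIa (norm_nonneg _) hZ0.le
  have h8 : ‖(8 : ℂ)‖ = 8 := by norm_num
  have hnN : ‖sN r ↑l‖ = 8 * π * l * r := by
    rw [sN, norm_mul, norm_mul, norm_mul, h8, Complex.norm_real, Complex.norm_real,
      Complex.norm_real, Real.norm_eq_abs, Real.norm_eq_abs, Real.norm_eq_abs,
      _root_.abs_of_pos Real.pi_pos, _root_.abs_of_pos hl, _root_.abs_of_pos hr]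
  have hnNp : ‖sNp r‖ = 8 * π * r := by
    rw [sNp, norm_mul, norm_mul, h8, Complex.norm_real, Complex.norm_real,
      Real.norm_eq_abs, Real.norm_eq_abs,
      _root_.abs_of_pos Real.pi_pos, _root_.abs_of_pos hr]
  have hnQv : ‖sQv a r ↑l‖ ≤ 6 * Z := by
    rw [sQv]
    calc ‖sU a ↑l * sv r ↑l + su a ↑l * -sW r ↑l‖
        ≤ ‖sU a ↑l‖ * ‖sv r ↑l‖ + ‖su a ↑l‖ * ‖sW r ↑l‖ := by
          refine (norm_add_le _ _).trans ?_
          rw [norm_mul, norm_mul, norm_neg]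
      _ ≤ Z * 2 + 2 * (l * Z) * (2 / l) := by
          gcongr <;> positivity
      _ = 6 * Z := by field_simp; ring
  have hnnum1 : ‖sQv a r ↑l * sN r ↑l - su a ↑l * sv r ↑l * sNp r‖ ≤ 80 * π * (l * r * Z) := by
    calc ‖sQv a r ↑l * sN r ↑l - su a ↑l * sv r ↑l * sNp r‖
        ≤ ‖sQv a r ↑l‖ * ‖sN r ↑l‖ + ‖su a ↑l‖ * ‖sv r ↑l‖ * ‖sNp r‖ := by
          refine (norm_sub_le _ _).trans ?_
          rw [norm_mul, norm_mul, norm_mul]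
      _ ≤ 6 * Z * (8 * π * l * r) + 2 * (l * Z) * 2 * (8 * π * r) := by
          rw [hnN, hnNp]
          gcongr <;> positivity
      _ = 80 * π * (l * r * Z) := by ring
  have e1 : ‖sU a ↑l * (Complex.I * (a : ℂ)) * sv r ↑l‖ ≤ Z ^ 2 * 2 := by
    rw [norm_mul]
    exact mul_le_mul hnU' hnv (norm_nonneg _) (by positivity)
  have e2 : ‖sU a ↑l * -sW r ↑l‖ ≤ Z * (2 / l) := by
    rw [norm_mul, norm_neg]
    exact mul_le_mul hnU hnW (norm_nonneg _) hZ0.le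
  have e3 : ‖su a ↑l * -(sW r ↑l * ((-1 - Complex.I) * (r : ℂ)))‖ ≤ 2 * (l * Z) * (16 / l ^ 2) := by
    rw [norm_mul, norm_neg]
    exact mul_le_mul hnu hnW' (norm_nonneg _) (by positivity)
  have hnQd : ‖sQd a r ↑l‖ ≤ 38 * Z ^ 2 / l := by
    calc ‖sQd a r ↑l‖
        ≤ Z ^ 2 * 2 + Z * (2 / l) + (Z * (2 / l) + 2 * (l * Z) * (16 / l ^ 2)) := by
          rw [sQd]
          exact (norm_add_le _ _).trans (add_le_add
            ((norm_add_le _ _).trans (add_le_add e1 e2))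
            ((norm_add_le _ _).trans (add_le_add e2 e3)))
      _ ≤ 38 * Z ^ 2 / l := by
          have e : Z ^ 2 * 2 + Z * (2 / l) + (Z * (2 / l) + 2 * (l * Z) * (16 / l ^ 2))
              = (2 * Z ^ 2 * l + 4 * Z + 32 * Z) / l := by
            field_simp
            ring
          rw [e, div_le_div_iff₀ hl hl]
          have h1 : Z ^ 2 * l ≤ Z ^ 2 * 1 := mul_le_mul_of_nonneg_left hl1 (sq_nonneg Z)
          nlinarith [h1, hZ12, hl, hZ0]
  have hnPd : ‖sPd a r ↑l‖ ≤ 400 * π * (r * Z ^ 2) := by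
    calc ‖sPd a r ↑l‖
        ≤ ‖sQd a r ↑l‖ * ‖sN r ↑l‖ + ‖sQv a r ↑l‖ * ‖sNp r‖ + ‖sQv a r ↑l‖ * ‖sNp r‖ := by
          rw [sPd]
          exact (norm_sub_le _ _).trans (add_le_add
            ((norm_add_le _ _).trans (add_le_add (norm_mul_le _ _) (norm_mul_le _ _)))
            (norm_mul_le _ _))
      _ ≤ 38 * Z ^ 2 / l * (8 * π * l * r) + 6 * Z * (8 * π * r) + 6 * Z * (8 * π * r) := by
          rw [hnN, hnNp]
          gcongr <;> positivity
      _ = 304 * π * (r * Z ^ 2) + 96 * (π * (r * Z)) := by field_simp; ring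
      _ ≤ 304 * π * (r * Z ^ 2) + 96 * (π * (r * Z ^ 2)) := by
          have : π * (r * Z) ≤ π * (r * Z ^ 2) :=
            mul_le_mul_of_nonneg_left (mul_le_mul_of_nonneg_left hZ12 hr.le) Real.pi_pos.le
          linarith [this]
      _ = 400 * π * (r * Z ^ 2) := by ring
  -- derivative facts
  have hD : ∀ t : ℝ, t ≠ 0 →
      HasDerivAt (fun t : ℝ => su a ↑t * sv r ↑t / sN r ↑t) (sg1 a r ↑t) t := by
    intro t ht
    exact (hasDerivAt_sF a r hr.ne' ↑t (Complex.ofReal_ne_zero.mpr ht)).comp_ofReal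
  interval_cases k
  · -- k = 0
    simp only [iteratedDeriv_zero]
    rw [norm_div, norm_mul, hnN]
    calc ‖su a ↑l‖ * ‖sv r ↑l‖ / (8 * π * l * r) ≤ 2 * (l * Z) * 2 / (8 * π * l * r) := by
          gcongr
      _ ≤ 100 * Z ^ (0 + 1) / (r * l ^ 0) := by
        rw [div_le_div_iff₀ (by positivity) (by positivity)]
        have h1 : 2 * (l * Z) * 2 * (r * l ^ 0) = 4 * (l * r * Z) := by ring
        have h2 : 100 * Z ^ (0 + 1) * (8 * π * l * r) = 800 * π * (l * r * Z) := by ring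
        rw [h1, h2]
        have h3 : (4:ℝ) ≤ 800 * π := by nlinarith [Real.pi_gt_three]
        exact mul_le_mul_of_nonneg_right h3 (by positivity)
  · -- k = 1
    rw [iteratedDeriv_one, (hD l hl.ne').deriv]
    rw [sg1, norm_div, norm_pow, hnN]
    calc ‖sQv a r ↑l * sN r ↑l - su a ↑l * sv r ↑l * sNp r‖ / (8 * π * l * r) ^ 2
        ≤ 80 * π * (l * r * Z) / (8 * π * l * r) ^ 2 := by gcongr
      _ ≤ 100 * Z ^ (1 + 1) / (r * l ^ 1) := by
        rw [div_le_div_iff₀ (by positivity) (by positivity)]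
        have h1 : 80 * π * (l * r * Z) * (r * l ^ 1) = 80 * π * (l ^ 2 * r ^ 2 * Z) := by ring
        have h2 : 100 * Z ^ (1 + 1) * (8 * π * l * r) ^ 2
            = 6400 * π ^ 2 * (l ^ 2 * r ^ 2 * Z ^ 2) := by ring
        rw [h1, h2]
        have h3 : (80:ℝ) * π ≤ 6400 * π ^ 2 := by nlinarith [Real.pi_gt_three]
        have h4 : l ^ 2 * r ^ 2 * Z ≤ l ^ 2 * r ^ 2 * Z ^ 2 :=
          mul_le_mul_of_nonneg_left hZ12 (by positivity)
        calc 80 * π * (l ^ 2 * r ^ 2 * Z) ≤ 6400 * π ^ 2 * (l ^ 2 * r ^ 2 * Z) :=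
              mul_le_mul_of_nonneg_right h3 (by positivity)
          _ ≤ 6400 * π ^ 2 * (l ^ 2 * r ^ 2 * Z ^ 2) :=
              mul_le_mul_of_nonneg_left h4 (by positivity)
  · -- k = 2
    rw [iteratedDeriv_succ, iteratedDeriv_one]
    have hev : deriv (fun t : ℝ => su a ↑t * sv r ↑t / sN r ↑t) =ᶠ[nhds l]
        fun t : ℝ => sg1 a r ↑t := by
      filter_upwards [eventually_ne_nhds hl.ne'] with t ht using (hD t ht).deriv
    rw [hev.deriv_eq]
    have hD2 : HasDerivAt (fun t : ℝ => sg1 a r ↑t) (sg2 a r ↑l) l :=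
      (hasDerivAt_sg1 a r hr.ne' ↑l (Complex.ofReal_ne_zero.mpr hl.ne')).comp_ofReal
    rw [hD2.deriv]
    rw [sg2, norm_div, norm_pow, norm_pow, hnN]
    calc ‖sPd a r ↑l * sN r ↑l ^ 2 -
          (sQv a r ↑l * sN r ↑l - su a ↑l * sv r ↑l * sNp r) * (2 * sN r ↑l * sNp r)‖ /
          ((8 * π * l * r) ^ 2) ^ 2
        ≤ (‖sPd a r ↑l‖ * ‖sN r ↑l‖ ^ 2 +
            ‖sQv a r ↑l * sN r ↑l - su a ↑l * sv r ↑l * sNp r‖ * (2 * ‖sN r ↑l‖ * ‖sNp r‖)) /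
            ((8 * π * l * r) ^ 2) ^ 2 := by
          gcongr
          refine (norm_sub_le _ _).trans ?_
          rw [norm_mul, norm_mul, norm_mul, norm_mul, norm_pow]
          norm_num
      _ ≤ (400 * π * (r * Z ^ 2) * (8 * π * l * r) ^ 2 +
            80 * π * (l * r * Z) * (2 * (8 * π * l * r) * (8 * π * r))) /
            ((8 * π * l * r) ^ 2) ^ 2 := by
          rw [hnN, hnNp]
          gcongr <;> positivity
      _ ≤ 100 * Z ^ (2 + 1) / (r * l ^ 2) := by
        rw [div_le_div_iff₀ (by positivity) (by positivity)]
        have h1 : (400 * π * (r * Z ^ 2) * (8 * π * l * r) ^ 2 +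
            80 * π * (l * r * Z) * (2 * (8 * π * l * r) * (8 * π * r))) * (r * l ^ 2)
            = π ^ 3 * (l ^ 4 * r ^ 4) * (25600 * Z ^ 2 + 10240 * Z) := by ring
        have h2 : 100 * Z ^ (2 + 1) * ((8 * π * l * r) ^ 2) ^ 2
            = 409600 * (π ^ 4 * (l ^ 4 * r ^ 4) * Z ^ 3) := by ring
        rw [h1, h2]
        have hA : 25600 * Z ^ 2 + 10240 * Z ≤ 35840 * Z ^ 3 := by linarith [hZ23, hZ13]
        have hB : (35840:ℝ) ≤ 409600 * π := by nlinarith [Real.pi_gt_three]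
        calc π ^ 3 * (l ^ 4 * r ^ 4) * (25600 * Z ^ 2 + 10240 * Z)
            ≤ π ^ 3 * (l ^ 4 * r ^ 4) * (35840 * Z ^ 3) :=
              mul_le_mul_of_nonneg_left hA (by positivity)
          _ = 35840 * (π ^ 3 * (l ^ 4 * r ^ 4) * Z ^ 3) := by ring
          _ ≤ 409600 * π * (π ^ 3 * (l ^ 4 * r ^ 4) * Z ^ 3) :=
              mul_le_mul_of_nonneg_right hB (by positivity)
          _ = 409600 * (π ^ 4 * (l ^ 4 * r ^ 4) * Z ^ 3) := by ring

end
end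

section
/- There is a universal constant C such that for all real numbers a, b, λ with 0 < a ≤ 1, b ≥ 1, b − a > 1, and 0 < λ ≤ 1, one has | e^{(ia + ib)λ} / (ia + ib)³ − e^{(−a + ib)λ} / (−a + ib)³ | ≤ C a (λ / b³ + 1 / b⁴), and likewise | e^{(ia − ib)λ} / (ia − ib)³ − e^{(−a − ib)λ} / (−a − ib)³ | ≤ C a (λ / b³ + 1 / b⁴). -/
open Real Complex

set_option maxHeartbeats 1000000 in
lemma key {s : Set ℂ} (hs : Convex ℝ s) {m l : ℝ} (hm : 0 < m) (hl : 0 < l)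
    (hb : ∀ u ∈ s, u.re ≤ 0 ∧ m ≤ ‖u‖)
    {z w : ℂ} (hz : z ∈ s) (hw : w ∈ s) :
    ‖Complex.exp (w * l) / w ^ 3 - Complex.exp (z * l) / z ^ 3‖
      ≤ (l / m ^ 3 + 3 / m ^ 4) * ‖w - z‖ := by
  set f : ℂ → ℂ := fun u => Complex.exp (u * l) / u ^ 3 with hf
  set D : ℂ → ℂ := fun u => (l : ℂ) * Complex.exp (u * l) / u ^ 3
      - 3 * Complex.exp (u * l) / u ^ 4 with hD
  have hderiv : ∀ u ∈ s, HasDerivWithinAt f (D u) s u := by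
    intro u hu
    have hu0 : u ≠ 0 := by
      intro h
      have h2 := (hb u hu).2
      rw [h] at h2
      simp at h2
      linarith
    have h1 : HasDerivAt (fun u : ℂ => Complex.exp (u * l)) (Complex.exp (u * l) * l) u := by
      simpa using ((hasDerivAt_id u).mul_const (l : ℂ)).cexp
    have h2 : HasDerivAt (fun u : ℂ => u ^ 3) ((3 : ℕ) * u ^ 2) u := by
      simpa using hasDerivAt_pow 3 u
    have h3 := h1.div h2 (pow_ne_zero 3 hu0)
    have heq : (Complex.exp (u * l) * l * u ^ 3 - Complex.exp (u * l) * ((3:ℕ) * u ^ 2)) /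
        (u ^ 3) ^ 2 = D u := by
      simp only [hD]
      field_simp
      ring
    rw [heq] at h3
    exact h3.hasDerivWithinAt
  have hbound : ∀ u ∈ s, ‖D u‖ ≤ l / m ^ 3 + 3 / m ^ 4 := by
    intro u hu
    obtain ⟨hre, hnm⟩ := hb u hu
    have hexp : ‖Complex.exp (u * l)‖ ≤ 1 := by
      rw [Complex.norm_exp]
      apply Real.exp_le_one_iff.mpr
      simp [Complex.mul_re]
      nlinarith
    have hexp0 : 0 ≤ ‖Complex.exp (u * l)‖ := norm_nonneg _
    have hnm3 : m ^ 3 ≤ ‖u‖ ^ 3 := pow_le_pow_left₀ hm.le hnm 3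
    have hnm4 : m ^ 4 ≤ ‖u‖ ^ 4 := pow_le_pow_left₀ hm.le hnm 4
    have e1 : ‖(l : ℂ) * Complex.exp (u * l) / u ^ 3‖ ≤ l / m ^ 3 := by
      rw [norm_div, norm_mul, norm_pow, Complex.norm_real, Real.norm_eq_abs, abs_of_pos hl]
      apply div_le_div₀ hl.le (by nlinarith) (by positivity) hnm3
    have e2 : ‖3 * Complex.exp (u * l) / u ^ 4‖ ≤ 3 / m ^ 4 := by
      rw [norm_div, norm_mul, norm_pow]
      have : ‖(3 : ℂ)‖ = 3 := by norm_num
      rw [this]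
      apply div_le_div₀ (by norm_num) (by nlinarith) (by positivity) hnm4
    calc ‖D u‖ ≤ ‖(l : ℂ) * Complex.exp (u * l) / u ^ 3‖ +
        ‖3 * Complex.exp (u * l) / u ^ 4‖ := norm_sub_le _ _
      _ ≤ l / m ^ 3 + 3 / m ^ 4 := add_le_add e1 e2
  exact hs.norm_image_sub_le_of_norm_hasDerivWithin_le hderiv hbound hz hw

theorem stmt12 :
    ∃ C : ℝ, ∀ a b l : ℝ, 0 < a → a ≤ 1 → 1 ≤ b → 1 < b - a → 0 < l → l ≤ 1 →
      ‖Complex.exp ((Complex.I * a + Complex.I * b) * l) / (Complex.I * a + Complex.I * b) ^ 3 -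
          Complex.exp ((-(a : ℂ) + Complex.I * b) * l) / (-(a : ℂ) + Complex.I * b) ^ 3‖
        ≤ C * a * (l / b ^ 3 + 1 / b ^ 4) ∧
      ‖Complex.exp ((Complex.I * a - Complex.I * b) * l) / (Complex.I * a - Complex.I * b) ^ 3 -
          Complex.exp ((-(a : ℂ) - Complex.I * b) * l) / (-(a : ℂ) - Complex.I * b) ^ 3‖
        ≤ C * a * (l / b ^ 3 + 1 / b ^ 4) := by
  refine ⟨100, fun a b l ha ha1 hb1 hba hl hl1 => ?_⟩
  have hb0 : (0:ℝ) < b := by linarith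
  have ht1 : 0 ≤ a * (l / b ^ 3) := by positivity
  have ht2 : 0 ≤ a * (1 / b ^ 4) := by positivity
  constructor
  · set s : Set ℂ := {u : ℂ | u.re ≤ 0 ∧ b ≤ u.im} with hsdef
    have hs : Convex ℝ s := (convex_halfSpace_re_le 0).inter (convex_halfSpace_im_ge b)
    have hbnd : ∀ u ∈ s, u.re ≤ 0 ∧ b ≤ ‖u‖ := by
      intro u hu
      exact ⟨hu.1, le_trans hu.2 (le_trans (le_abs_self _) (Complex.abs_im_le_norm u))⟩
    have hz : Complex.I * a + Complex.I * b ∈ s := by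
      constructor <;> simp <;> linarith
    have hw : -(a : ℂ) + Complex.I * b ∈ s := by
      constructor <;> simp <;> linarith
    have h := key hs hb0 hl hbnd hw hz
    have hwz : ‖(Complex.I * (a:ℂ) + Complex.I * b) - (-(a : ℂ) + Complex.I * b)‖ ≤ 2 * a := by
      have : (Complex.I * (a:ℂ) + Complex.I * b) - (-(a : ℂ) + Complex.I * b)
          = (a : ℂ) + Complex.I * a := by ring
      rw [this]
      calc ‖(a : ℂ) + Complex.I * a‖ ≤ ‖(a:ℂ)‖ + ‖Complex.I * (a:ℂ)‖ := norm_add_le _ _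
        _ = 2 * a := by simp [abs_of_pos ha]; ring
    calc ‖_‖ ≤ (l / b ^ 3 + 3 / b ^ 4) * ‖(Complex.I * (a:ℂ) + Complex.I * b) -
          (-(a : ℂ) + Complex.I * b)‖ := h
      _ ≤ (l / b ^ 3 + 3 / b ^ 4) * (2 * a) := by
          apply mul_le_mul_of_nonneg_left hwz (by positivity)
      _ = 2 * (a * (l / b ^ 3)) + 6 * (a * (1 / b ^ 4)) := by ring
      _ ≤ 100 * (a * (l / b ^ 3)) + 100 * (a * (1 / b ^ 4)) := by linarith
      _ = 100 * a * (l / b ^ 3 + 1 / b ^ 4) := by ring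
  · set s : Set ℂ := {u : ℂ | u.re ≤ 0 ∧ u.im ≤ -(b/2)} with hsdef
    have hs : Convex ℝ s := (convex_halfSpace_re_le 0).inter (convex_halfSpace_im_le (-(b/2)))
    have hm : (0:ℝ) < b / 2 := by linarith
    have hbnd : ∀ u ∈ s, u.re ≤ 0 ∧ b / 2 ≤ ‖u‖ := by
      intro u hu
      refine ⟨hu.1, ?_⟩
      have : b / 2 ≤ |u.im| := by
        have := hu.2
        rw [abs_of_nonpos (by linarith)]
        linarith
      exact le_trans this (Complex.abs_im_le_norm u)
    have hz : Complex.I * a - Complex.I * b ∈ s := by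
      constructor <;> simp <;> linarith
    have hw : -(a : ℂ) - Complex.I * b ∈ s := by
      constructor <;> simp <;> linarith
    have h := key hs hm hl hbnd hw hz
    have hwz : ‖(Complex.I * (a:ℂ) - Complex.I * b) - (-(a : ℂ) - Complex.I * b)‖ ≤ 2 * a := by
      have : (Complex.I * (a:ℂ) - Complex.I * b) - (-(a : ℂ) - Complex.I * b)
          = (a : ℂ) + Complex.I * a := by ring
      rw [this]
      calc ‖(a : ℂ) + Complex.I * a‖ ≤ ‖(a:ℂ)‖ + ‖Complex.I * (a:ℂ)‖ := norm_add_le _ _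
        _ = 2 * a := by simp [abs_of_pos ha]; ring
    have e3 : (b/2)^3 = b^3/8 := by ring
    have e4 : (b/2)^4 = b^4/16 := by ring
    calc ‖_‖ ≤ (l / (b/2) ^ 3 + 3 / (b/2) ^ 4) * ‖(Complex.I * (a:ℂ) - Complex.I * b) -
          (-(a : ℂ) - Complex.I * b)‖ := h
      _ ≤ (l / (b/2) ^ 3 + 3 / (b/2) ^ 4) * (2 * a) := by
          apply mul_le_mul_of_nonneg_left hwz (by positivity)
      _ = (8 * l / b ^ 3 + 48 / b ^ 4) * (2 * a) := by
          rw [e3, e4]; field_simp; ring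
      _ = 16 * (a * (l / b ^ 3)) + 96 * (a * (1 / b ^ 4)) := by ring
      _ ≤ 100 * (a * (l / b ^ 3)) + 100 * (a * (1 / b ^ 4)) := by linarith
      _ = 100 * a * (l / b ^ 3 + 1 / b ^ 4) := by ring
end
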